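/- Strain error estimate, case h₀ = 1: for every p ∈ [1,∞], the relative error ‖u^{scb}-u^a‖_{ℓ^p}/‖u^a‖_{ℓ^p} in the linearized 1D model satisfies Err_p = 2^{1/p}e^{-α} + O(e^{-2α}) as α → ∞. -/

import Mathlib

noncomputable def morseR0 (α : ℝ) : ℝ :=
  1 + (1 / α) * Real.log ((1 + 2 * Real.exp (-α)) / (1 + 2 * Real.exp (-2 * α)))

noncomputable def morse (α φ₀ : ℝ) (r : ℝ) : ℝ :=
  Real.exp (-2 * α * (r - morseR0 α)) - 2 * Real.exp (-α * (r - morseR0 α)) - φ₀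

lemma morse_hasDerivAt (α φ₀ r : ℝ) :
    HasDerivAt (morse α φ₀)
      (-2*α*Real.exp (-2*α*(r - morseR0 α)) + 2*α*Real.exp (-α*(r - morseR0 α))) r := by
  have h1 : HasDerivAt (fun r : ℝ => -2*α*(r - morseR0 α)) (-2*α) r := by
    simpa using ((hasDerivAt_id r).sub_const (morseR0 α)).const_mul (-2*α)
  have h2 : HasDerivAt (fun r : ℝ => -α*(r - morseR0 α)) (-α) r := by
    simpa using ((hasDerivAt_id r).sub_const (morseR0 α)).const_mul (-α)
  have := (h1.exp.sub (h2.exp.const_mul 2)).sub_const φ₀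
  exact this.congr_deriv (by ring)

lemma morse_deriv (α φ₀ : ℝ) : deriv (morse α φ₀) =
    fun r => -2*α*Real.exp (-2*α*(r - morseR0 α)) + 2*α*Real.exp (-α*(r - morseR0 α)) := by
  funext r; exact (morse_hasDerivAt α φ₀ r).deriv

lemma morse_deriv2 (α φ₀ r : ℝ) : deriv (deriv (morse α φ₀)) r =
    4*α^2*Real.exp (-2*α*(r - morseR0 α)) - 2*α^2*Real.exp (-α*(r - morseR0 α)) := by
  rw [morse_deriv]
  have h1 : HasDerivAt (fun r : ℝ => -2*α*(r - morseR0 α)) (-2*α) r := by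
    simpa using ((hasDerivAt_id r).sub_const (morseR0 α)).const_mul (-2*α)
  have h2 : HasDerivAt (fun r : ℝ => -α*(r - morseR0 α)) (-α) r := by
    simpa using ((hasDerivAt_id r).sub_const (morseR0 α)).const_mul (-α)
  have := ((h1.exp.const_mul (-2*α)).add (h2.exp.const_mul (2*α)))
  refine this.deriv.trans ?_; ring

lemma exp_one_val (α : ℝ) (hα : 0 < α) :
    Real.exp (-α*(1 - morseR0 α)) = (1 + 2*Real.exp (-α))/(1 + 2*Real.exp (-2*α)) := by
  set S : ℝ := (1 + 2*Real.exp (-α))/(1 + 2*Real.exp (-2*α)) with hS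
  have hSpos : 0 < S := by
    apply div_pos <;> positivity
  have h1 : -α*(1 - morseR0 α) = Real.log S := by
    unfold morseR0
    field_simp
    rw [hS]
    ring_nf
  rw [h1, Real.exp_log hSpos]

lemma exp_two_val (α : ℝ) (hα : 0 < α) :
    Real.exp (-α*(2 - morseR0 α)) =
      (1 + 2*Real.exp (-α))/(1 + 2*Real.exp (-2*α)) * Real.exp (-α) := by
  have h : -α*(2 - morseR0 α) = -α*(1 - morseR0 α) + (-α) := by ring
  rw [h, Real.exp_add, exp_one_val α hα]

lemma geo_shift (C x : ℝ) (hx0 : 0 ≤ x) (hx1 : x < 1) :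
    Summable (fun n : ℕ => C * x ^ (n+1)) ∧ ∑' n : ℕ, C * x ^ (n+1) = C * x * (1 - x)⁻¹ := by
  have h : (fun n : ℕ => C * x ^ (n+1)) = fun n : ℕ => (C*x) * x ^ n := by
    funext n; ring
  rw [h]
  exact ⟨(summable_geometric_of_lt_one hx0 hx1).mul_left (C*x),
    by rw [tsum_mul_left, tsum_geometric_of_lt_one hx0 hx1]⟩

lemma tsum_ite (A C x : ℝ) (hx0 : 0 ≤ x) (hx1 : x < 1) :
    ∑' n : ℕ, (if n = 0 then A else C * x ^ n) = A + C * x * (1 - x)⁻¹ := by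
  obtain ⟨hsum, hval⟩ := geo_shift C x hx0 hx1
  have hshift : (fun n : ℕ => if n + 1 = 0 then A else C * x ^ (n+1))
      = fun n : ℕ => C * x ^ (n+1) := by
    funext n; simp
  have hS : Summable (fun n : ℕ => if n = 0 then A else C * x ^ n) := by
    apply (summable_nat_add_iff 1).1
    simpa [hshift] using hsum
  rw [Summable.tsum_eq_zero_add hS]
  simp only [hshift, if_pos rfl]
  rw [hval]; simp

lemma pow_rpow_comm (lam : ℝ) (hl : 0 ≤ lam) (p : ℝ) (ℓ : ℕ) :
    (lam ^ ℓ) ^ p = (lam ^ p) ^ ℓ := by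
  rw [← Real.rpow_natCast lam ℓ, ← Real.rpow_natCast (lam^p) ℓ,
    ← Real.rpow_mul hl, ← Real.rpow_mul hl, mul_comm]

lemma pnorm_ratio (p lam K : ℝ) (hp : 1 ≤ p) (h0 : 0 < lam) (h1 : lam < 1) (hK : 0 < K) :
    (∑' ℓ : ℕ, (if ℓ = 0 then (K*(lam*(1-lam)/(1+lam^2)))^p else K^p * (lam^p)^ℓ))^(1/p) /
      (∑' ℓ : ℕ, K^p * (lam^p)^ℓ)^(1/p)
    = lam * (((1-lam)/(1+lam^2))^p * (1 - lam^p) + 1)^(1/p) := by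
  have hp0 : (0:ℝ) < p := lt_of_lt_of_le one_pos hp
  have hq0 : (0:ℝ) < lam^p := Real.rpow_pos_of_pos h0 p
  have hq1 : lam^p < 1 := Real.rpow_lt_one h0.le h1 hp0
  have hKp : (0:ℝ) < K^p := Real.rpow_pos_of_pos hK p
  have hw0 : (0:ℝ) < (1-lam)/(1+lam^2) := div_pos (by linarith) (by positivity)
  have hmid : (0:ℝ) ≤ K*(lam*(1-lam)/(1+lam^2)) :=
    mul_nonneg hK.le (div_nonneg (mul_nonneg h0.le (by linarith)) (by positivity))
  have hA : (K*(lam*(1-lam)/(1+lam^2)))^p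
      = K^p * (lam^p * ((1-lam)/(1+lam^2))^p) := by
    rw [show K*(lam*(1-lam)/(1+lam^2)) = K*(lam*((1-lam)/(1+lam^2))) by ring,
      Real.mul_rpow hK.le (by positivity), Real.mul_rpow h0.le hw0.le]
  have hnum : ∑' ℓ : ℕ, (if ℓ = 0 then (K*(lam*(1-lam)/(1+lam^2)))^p else K^p * (lam^p)^ℓ)
      = (K*(lam*(1-lam)/(1+lam^2)))^p + K^p * (lam^p) * (1 - lam^p)⁻¹ :=
    tsum_ite _ _ _ hq0.le hq1
  have hden : ∑' ℓ : ℕ, K^p * (lam^p)^ℓ = K^p * (1 - lam^p)⁻¹ := by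
    rw [tsum_mul_left, tsum_geometric_of_lt_one hq0.le hq1]
  rw [hnum, hden]
  have hdenpos : (0:ℝ) < K^p * (1 - lam^p)⁻¹ := by
    apply mul_pos hKp; rw [inv_pos]; linarith
  have hnumpos : (0:ℝ) ≤ (K*(lam*(1-lam)/(1+lam^2)))^p + K^p * (lam^p) * (1 - lam^p)⁻¹ := by
    have := Real.rpow_nonneg hmid p
    nlinarith [mul_pos (mul_pos hKp hq0) (inv_pos.2 (show (0:ℝ) < 1 - lam^p by linarith))]
  rw [← Real.div_rpow hnumpos hdenpos.le]
  have hfrac : ((K*(lam*(1-lam)/(1+lam^2)))^p + K^p * (lam^p) * (1 - lam^p)⁻¹)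
      / (K^p * (1 - lam^p)⁻¹)
      = lam^p * (((1-lam)/(1+lam^2))^p * (1 - lam^p) + 1) := by
    rw [hA]
    have h1q : (1:ℝ) - lam^p ≠ 0 := by linarith
    field_simp
  have hBnn : (0:ℝ) ≤ ((1-lam)/(1+lam^2))^p * (1 - lam^p) + 1 := by
    have := mul_nonneg (Real.rpow_nonneg hw0.le p) (by linarith : (0:ℝ) ≤ 1 - lam^p)
    linarith
  rw [hfrac, Real.mul_rpow hq0.le hBnn,
    ← Real.rpow_mul h0.le, mul_one_div_cancel (ne_of_gt hp0), Real.rpow_one]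

lemma ciSup_geo (K x : ℝ) (hK : 0 ≤ K) (h0 : 0 ≤ x) (h1 : x ≤ 1) :
    ⨆ ℓ : ℕ, K * x ^ ℓ = K := by
  have hb : ∀ ℓ : ℕ, K * x ^ ℓ ≤ K := fun ℓ => by
    nlinarith [pow_le_one₀ h0 h1 (n := ℓ), pow_nonneg h0 ℓ]
  refine le_antisymm (ciSup_le hb) ?_
  have := le_ciSup (f := fun ℓ : ℕ => K * x ^ ℓ) ⟨K, by rintro y ⟨ℓ, rfl⟩; exact hb ℓ⟩ 0
  simpa using this

lemma ciSup_diff (K x w : ℝ) (hK : 0 ≤ K) (h0 : 0 < x) (h1 : x ≤ 1)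
    (hw1 : w ≤ K * x) :
    ⨆ ℓ : ℕ, (if ℓ = 0 then w else K * x ^ ℓ) = K * x := by
  have hb : ∀ ℓ : ℕ, (if ℓ = 0 then w else K * x ^ ℓ) ≤ K * x := by
    intro ℓ
    cases ℓ with
    | zero => simpa using hw1
    | succ n =>
      simp only [Nat.succ_ne_zero, if_false]
      have hx : x ^ (n+1) ≤ x := by
        calc x ^ (n+1) ≤ x ^ 1 := pow_le_pow_of_le_one (le_of_lt h0) h1 (by omega)
        _ = x := pow_one x
      nlinarith
  refine le_antisymm (ciSup_le hb) ?_
  have := le_ciSup (f := fun ℓ : ℕ => if ℓ = 0 then w else K * x ^ ℓ)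
    ⟨K * x, by rintro y ⟨ℓ, rfl⟩; exact hb ℓ⟩ 1
  simpa using this

lemma B_props (p lam : ℝ) (hp : 1 ≤ p) (h0 : 0 < lam) (h1 : lam < 1) :
    1 ≤ ((1-lam)/(1+lam^2))^p * (1 - lam^p) + 1 ∧
    ((1-lam)/(1+lam^2))^p * (1 - lam^p) + 1 ≤ 2 ∧
    2 - (((1-lam)/(1+lam^2))^p * (1 - lam^p) + 1) ≤ (1+2*p)*lam := by
  have hp0 : (0:ℝ) < p := lt_of_lt_of_le one_pos hp
  set q : ℝ := (1-lam)/(1+lam^2) with hqdef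
  have hden : (0:ℝ) < 1 + lam^2 := by positivity
  have hq0 : 0 < q := div_pos (by linarith) hden
  have hq1 : q ≤ 1 := by
    rw [div_le_one hden]; nlinarith
  have hqe : q * (1+lam^2) = 1 - lam := by
    rw [hqdef]; field_simp
  have hqp0 : 0 < q^p := Real.rpow_pos_of_pos hq0 p
  have hqp1 : q^p ≤ 1 := Real.rpow_le_one hq0.le hq1 hp0.le
  have hlp0 : 0 < lam^p := Real.rpow_pos_of_pos h0 p
  have hlp1 : lam^p < 1 := Real.rpow_lt_one h0.le h1 hp0
  have hlpl : lam^p ≤ lam := by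
    have := Real.rpow_le_rpow_of_exponent_ge h0 h1.le hp
    rwa [Real.rpow_one] at this
  have hbern : 1 + p*(q - 1) ≤ q^p := by
    have := one_add_mul_self_le_rpow_one_add (s := q - 1) (by linarith) hp
    simpa using this
  have h2pq : p*(1 - q) ≤ 2*p*lam := by
    have h2 : 1 - q ≤ 2*lam := by nlinarith
    nlinarith
  refine ⟨by nlinarith, by nlinarith, ?_⟩
  nlinarith [mul_nonneg hqp0.le hlp0.le]

lemma keybound (p lam eps B : ℝ) (hp : 1 ≤ p) (hl0 : 0 < lam) (he : 0 < eps)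
    (hB1 : 1 ≤ B) (hB2 : B ≤ 2) (h2B : 2 - B ≤ (1+2*p)*lam) (hle : lam ≤ 4*eps)
    (hclose : |lam - eps| ≤ 20*eps^2) :
    |lam * B^(1/p) - 2^(1/p)*eps| ≤ (44+8*p)*eps^2 := by
  have hp0 : (0:ℝ) < p := lt_of_lt_of_le one_pos hp
  have hip : 1/p ≤ 1 := by rw [div_le_one hp0]; exact hp
  have hip0 : 0 < 1/p := by positivity
  set X : ℝ := B^(1/p) with hX
  set T : ℝ := (2:ℝ)^(1/p) with hT
  have hX1 : 1 ≤ X := Real.one_le_rpow hB1 hip0.le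
  have hXT : X ≤ T := Real.rpow_le_rpow (by linarith) hB2 hip0.le
  have hT2 : T ≤ 2 := by
    calc T ≤ (2:ℝ)^(1:ℝ) := Real.rpow_le_rpow_of_exponent_le one_le_two hip
    _ = 2 := Real.rpow_one 2
  have hgap : T - X ≤ 2 - B := by
    have hmul : X = T * (B/2)^(1/p) := by
      rw [hX, hT, ← Real.mul_rpow (by norm_num) (by linarith)]
      ring_nf
    have hge : B/2 ≤ (B/2)^(1/p) := by
      have := Real.rpow_le_rpow_of_exponent_ge (x := B/2) (by linarith) (by linarith) hip
      rwa [Real.rpow_one] at this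
    have hle1 : (B/2)^(1/p) ≤ 1 := Real.rpow_le_one (by linarith) (by linarith) hip0.le
    nlinarith [Real.rpow_pos_of_pos (show (0:ℝ) < 2 by norm_num) (1/p)]
  obtain ⟨hc1, hc2⟩ := abs_le.1 hclose
  have hkey1 : X*(lam-eps) ≤ 40*eps^2 := by nlinarith
  have hkey2 : X*(eps-lam) ≤ 40*eps^2 := by nlinarith
  have hkey3 : eps*(T - X) ≤ (1+2*p)*(4*eps^2) := by
    nlinarith [mul_le_mul_of_nonneg_left hgap he.le, mul_le_mul_of_nonneg_left h2B he.le,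
      mul_nonneg (mul_nonneg (by linarith : (0:ℝ) ≤ 1+2*p) he.le) (by linarith : (0:ℝ) ≤ 4*eps - lam)]
  rw [abs_le]
  constructor
  · nlinarith [mul_nonneg he.le (sub_nonneg.2 hXT)]
  · nlinarith [mul_nonneg he.le (sub_nonneg.2 hXT)]

lemma morse_deriv_at (α φ₀ r : ℝ) : deriv (morse α φ₀) r =
    -2*α*Real.exp (-2*α*(r - morseR0 α)) + 2*α*Real.exp (-α*(r - morseR0 α)) :=
  (morse_hasDerivAt α φ₀ r).deriv

lemma lam_bounds (S ε lam : ℝ) (hS1 : 1 ≤ S) (hS2 : S ≤ 1 + 2*ε) (hε : 0 < ε)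
    (hεs : ε ≤ 1/7) (hl0 : 0 < lam) (hl1 : lam < 1)
    (hnorm : (2*S-1)*lam = ε*(1-2*S*ε)*(1+lam)^2) :
    lam ≤ 4*ε ∧ lam - ε ≤ 20*ε^2 ∧ ε - lam ≤ 20*ε^2 := by
  have hSε : S*ε ≤ 1/5 := by nlinarith
  have h1 : (0:ℝ) < 1 - 2*S*ε := by nlinarith
  have hD2 : lam ≤ (2*S-1)*lam := by nlinarith [mul_nonneg (by linarith : (0:ℝ) ≤ 2*S-2) hl0.le]
  have hF : ε*(1-2*S*ε)*(1+lam)^2 ≤ ε*(1+lam)^2 := by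
    nlinarith [mul_nonneg (mul_nonneg (mul_nonneg hε.le (by linarith : (0:ℝ) ≤ S)) hε.le) (sq_nonneg (1+lam))]
  have hH : ε^3 ≤ (1/7)*ε^2 := by nlinarith
  have hl4 : lam ≤ 4*ε := by
    nlinarith [mul_nonneg hε.le (by nlinarith : (0:ℝ) ≤ 4 - (1+lam)^2)]
  refine ⟨hl4, ?_, ?_⟩
  · have hG : ε*(1+lam)^2 ≤ ε*(1+4*ε)^2 := by
      nlinarith [mul_nonneg hε.le (by nlinarith : (0:ℝ) ≤ (1+4*ε)^2 - (1+lam)^2)]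
    nlinarith
  · rcases le_or_gt ε lam with h | h
    · nlinarith
    · have hC : ε*(1-2*S*ε) ≤ (2*S-1)*lam := by
        nlinarith [mul_nonneg (mul_nonneg hε.le h1.le) (by nlinarith : (0:ℝ) ≤ (1+lam)^2 - 1)]
      have hD : ε - lam ≤ (2*S-1)*(ε-lam) := by
        nlinarith [mul_nonneg (by linarith : (0:ℝ) ≤ 2*S-2) (by linarith : (0:ℝ) ≤ ε - lam)]
      have hE : (0:ℝ) ≤ ε*(4*ε - (2*S-2)) :=
        mul_nonneg hε.le (by linarith : (0:ℝ) ≤ 4*ε - (2*S-2))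
      have hB : ε*(S*ε) ≤ ε*((1+2*ε)*ε) :=
        mul_le_mul_of_nonneg_left (mul_le_mul_of_nonneg_right hS2 hε.le) hε.le
      nlinarith

lemma sign_facts (α S ε : ℝ) (hα : 0 < α) (hS1 : 1 ≤ S) (hε : 0 < ε) (hSε : S*ε ≤ 1/5) :
    0 < 4*α^2*S^2 - 2*α^2*S ∧ 4*α^2*(S*ε)^2 - 2*α^2*(S*ε) < 0 ∧
      0 < -2*α*(S*ε)^2 + 2*α*(S*ε) := by
  have hα2 : (0:ℝ) < α^2 := by positivity
  have hSεpos : 0 < S*ε := mul_pos (by linarith) hε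
  refine ⟨by nlinarith [mul_pos hα2 (mul_pos (show (0:ℝ) < S by linarith) (show (0:ℝ) < S by linarith))], ?_, ?_⟩
  · nlinarith [mul_pos hα2 hSεpos, mul_le_mul_of_nonneg_left
      (mul_le_mul_of_nonneg_left hSε hSεpos.le) hα2.le]
  · nlinarith [mul_pos hα hSεpos, mul_le_mul_of_nonneg_left
      (mul_le_mul_of_nonneg_left hSε hSεpos.le) hα.le]

lemma w_le_lam (lam : ℝ) (hl0 : 0 < lam) (hl1 : lam < 1) :
    lam*(1-lam)/(1+lam^2) ≤ lam := by
  rw [div_le_iff₀ (by positivity : (0:ℝ) < 1+lam^2)]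
  nlinarith

lemma quad_pos (a b lam : ℝ) (hb : b < 0) (hl0 : 0 < lam) (hl1 : lam < 1)
    (hdl : (a + b*(1+lam))*lam = -(b*(1+lam))) (ha2bl : (a + 2*b)*lam = -(b*(1+lam^2))) :
    b*(1+lam) < 0 ∧ b*(1+lam^2) < 0 ∧ 0 < a + b*(1+lam) ∧ 0 < a + 2*b := by
  have h1 : b*(1+lam) < 0 := by nlinarith
  have h2 : b*(1+lam^2) < 0 := by nlinarith [sq_nonneg lam]
  exact ⟨h1, h2, by nlinarith, by nlinarith⟩

set_option maxHeartbeats 2000000 in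
/-- strain error for h₀ = 1: for every p ∈ [1,∞],
Err_p = 2^{1/p} e^{-α} + O(e^{-2α}) as α → ∞ (p = ∞ is the sup-norm case, 2^{1/∞} = 1). -/
theorem stmt_14 (φ₀ : ℝ) (p : ℝ) (hp : 1 ≤ p) :
    ∃ C α₀ : ℝ, 0 < C ∧ 0 < α₀ ∧ ∀ α : ℝ, α₀ ≤ α →
      ∀ lam : ℝ, lam ∈ Set.Ioo (0 : ℝ) 1 →
        (let a : ℝ := deriv (deriv (morse α φ₀)) 1
         let b : ℝ := deriv (deriv (morse α φ₀)) 2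
         let c : ℝ := deriv (morse α φ₀) 2
         b * lam ^ 2 + (a + 2 * b) * lam + b = 0 →
         (let ua : ℕ → ℝ := fun ℓ => c * lam ^ ℓ / (a + b * (1 + lam))
          let uscb : ℕ → ℝ := fun ℓ => if ℓ = 0 then c / (a + 2 * b) else 0
          abs ((∑' ℓ : ℕ, |uscb ℓ - ua ℓ| ^ p) ^ (1 / p) / (∑' ℓ : ℕ, |ua ℓ| ^ p) ^ (1 / p)
              - 2 ^ (1 / p) * Real.exp (-α)) ≤ C * Real.exp (-2 * α) ∧
          abs ((⨆ ℓ : ℕ, |uscb ℓ - ua ℓ|) / (⨆ ℓ : ℕ, |ua ℓ|)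
              - Real.exp (-α)) ≤ C * Real.exp (-2 * α))) := by
  refine ⟨44 + 8*p, 2, by linarith, by norm_num, ?_⟩
  intro α hα lam hlam
  obtain ⟨hl0, hl1⟩ := hlam
  intro a b c hq ua uscb
  have hα0 : (0:ℝ) < α := by linarith
  have hε : (0:ℝ) < Real.exp (-α) := Real.exp_pos _
  set ε : ℝ := Real.exp (-α) with hεdef
  have hε2 : Real.exp (-2*α) = ε^2 := by
    rw [show (-2:ℝ)*α = -α + -α by ring, Real.exp_add]; rw [hεdef]; ring
  have hεs : ε ≤ 1/7 := by
    have h7 : (7:ℝ) < Real.exp 2 := by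
      have h1 := Real.exp_one_gt_d9
      have h2 : Real.exp 2 = Real.exp 1 * Real.exp 1 := by
        rw [← Real.exp_add]; norm_num
      nlinarith
    have hle : ε ≤ Real.exp (-2) := by
      rw [hεdef]; exact Real.exp_le_exp.2 (by linarith)
    have hen : Real.exp (-2) = (Real.exp 2)⁻¹ := Real.exp_neg 2
    rw [hen] at hle
    have hinv : (Real.exp 2)⁻¹ ≤ 1/7 := by
      rw [show (1:ℝ)/7 = (7:ℝ)⁻¹ by norm_num]
      exact inv_anti₀ (by norm_num) h7.le
    linarith
  -- values of a, b, c
  have hSval := exp_one_val α hα0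
  have hTval := exp_two_val α hα0
  rw [hε2] at hSval hTval
  set S : ℝ := (1 + 2*ε)/(1 + 2*ε^2) with hSdef
  have hSpos : 0 < S := div_pos (by linarith) (by positivity)
  have hS2sq : Real.exp (-2*α*(1 - morseR0 α)) = S^2 := by
    rw [show -2*α*(1 - morseR0 α) = (-α*(1-morseR0 α)) + (-α*(1-morseR0 α)) by ring,
      Real.exp_add, hSval]; ring
  have hT2sq : Real.exp (-2*α*(2 - morseR0 α)) = (S*ε)^2 := by
    rw [show -2*α*(2 - morseR0 α) = (-α*(2-morseR0 α)) + (-α*(2-morseR0 α)) by ring,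
      Real.exp_add, hTval]; ring
  have ha : a = 4*α^2*S^2 - 2*α^2*S := by
    show deriv (deriv (morse α φ₀)) 1 = _
    rw [morse_deriv2, hS2sq, hSval]
  have hb : b = 4*α^2*(S*ε)^2 - 2*α^2*(S*ε) := by
    show deriv (deriv (morse α φ₀)) 2 = _
    rw [morse_deriv2, hT2sq, hTval]
  have hc : c = -2*α*(S*ε)^2 + 2*α*(S*ε) := by
    show deriv (morse α φ₀) 2 = _
    rw [morse_deriv_at, hT2sq, hTval]
  -- S bounds and signs
  have hS1 : 1 ≤ S := by
    rw [hSdef, le_div_iff₀ (by positivity)]; nlinarith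
  have hS2 : S ≤ 1 + 2*ε := by
    rw [hSdef, div_le_iff₀ (by positivity)]; nlinarith
  have hSε : S*ε ≤ 1/5 := by nlinarith
  obtain ⟨hapos', hbneg', hcpos'⟩ := sign_facts α S ε hα0 hS1 hε hSε
  have hapos : 0 < a := by rw [ha]; exact hapos'
  have hbneg : b < 0 := by rw [hb]; exact hbneg'
  have hcpos : 0 < c := by rw [hc]; exact hcpos'
  -- quadratic consequences
  have hkey : a*lam = -(b*(1+lam)^2) := by linear_combination hq
  have hdl : (a + b*(1+lam))*lam = -(b*(1+lam)) := by linear_combination hq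
  have ha2bl : (a + 2*b)*lam = -(b*(1+lam^2)) := by linear_combination hq
  obtain ⟨hbl1, hbl2, hdpos, ha2bpos⟩ := quad_pos a b lam hbneg hl0 hl1 hdl ha2bl
  -- normalized equation
  have hnorm : (2*S-1)*lam = ε*(1-2*S*ε)*(1+lam)^2 := by
    have h2 : (0:ℝ) < 2*α^2*S := mul_pos (by positivity) hSpos
    apply mul_left_cancel₀ (ne_of_gt h2)
    calc 2*α^2*S*((2*S-1)*lam) = a*lam := by rw [ha]; ring
    _ = -(b*(1+lam)^2) := hkey
    _ = 2*α^2*S*(ε*(1-2*S*ε)*(1+lam)^2) := by rw [hb]; ring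
  obtain ⟨hl4, hup, hdn⟩ := lam_bounds S ε lam hS1 hS2 hε hεs hl0 hl1 hnorm
  have hcl : |lam - ε| ≤ 20*ε^2 := abs_le.2 ⟨by linarith, hup⟩
  -- K and fraction identities
  set K : ℝ := c/(a + b*(1+lam)) with hKdef
  have hKpos : 0 < K := div_pos hcpos hdpos
  have hfd : c/(a+b*(1+lam)) = -(c*lam)/(b*(1+lam)) := by
    rw [div_eq_div_iff (ne_of_gt hdpos) (ne_of_lt hbl1)]
    linear_combination c*hdl
  have hfa : c/(a+2*b) = -(c*lam)/(b*(1+lam^2)) := by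
    rw [div_eq_div_iff (ne_of_gt ha2bpos) (ne_of_lt hbl2)]
    linear_combination c*ha2bl
  have hua : ∀ ℓ:ℕ, ua ℓ = K*lam^ℓ := by
    intro ℓ
    show c*lam^ℓ/(a+b*(1+lam)) = K*lam^ℓ
    rw [hKdef]; ring
  have h0eq : c/(a+2*b) - c/(a+b*(1+lam)) = K*(lam*(1-lam)/(1+lam^2)) := by
    rw [hKdef, hfd, hfa]
    have hbne : b ≠ 0 := ne_of_lt hbneg
    have h1l : (1:ℝ)+lam ≠ 0 := by positivity
    have h1l2 : (1:ℝ)+lam^2 ≠ 0 := by positivity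
    have hlne : lam ≠ 0 := ne_of_gt hl0
    field_simp
    ring
  have hdiffval : ∀ ℓ:ℕ, uscb ℓ - ua ℓ
      = if ℓ = 0 then K*(lam*(1-lam)/(1+lam^2)) else -(K*lam^ℓ) := by
    intro ℓ
    cases ℓ with
    | zero =>
      show c/(a+2*b) - c*lam^0/(a+b*(1+lam)) = _
      rw [pow_zero, mul_one, if_pos rfl]
      exact h0eq
    | succ n =>
      show (0:ℝ) - c*lam^(n+1)/(a+b*(1+lam)) = _
      simp only [Nat.succ_ne_zero, if_false]
      rw [hKdef]; ring
  clear_value a b c ua uscb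
  have hwnn : (0:ℝ) ≤ lam*(1-lam)/(1+lam^2) :=
    div_nonneg (mul_nonneg hl0.le (by linarith)) (by positivity)
  have hden_eq : ∀ ℓ:ℕ, |ua ℓ|^p = K^p*(lam^p)^ℓ := by
    intro ℓ
    rw [hua ℓ, abs_of_nonneg (mul_nonneg hKpos.le (pow_nonneg hl0.le ℓ)),
      Real.mul_rpow hKpos.le (pow_nonneg hl0.le ℓ), pow_rpow_comm lam hl0.le]
  have hnum_eq : ∀ ℓ:ℕ, |uscb ℓ - ua ℓ|^p
      = if ℓ = 0 then (K*(lam*(1-lam)/(1+lam^2)))^p else K^p*(lam^p)^ℓ := by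
    intro ℓ
    rw [hdiffval ℓ]
    cases ℓ with
    | zero => rw [if_pos rfl, if_pos rfl, abs_of_nonneg (mul_nonneg hKpos.le hwnn)]
    | succ n =>
      simp only [Nat.succ_ne_zero, if_false]
      rw [abs_neg, abs_of_nonneg (mul_nonneg hKpos.le (pow_nonneg hl0.le (n+1))),
        Real.mul_rpow hKpos.le (pow_nonneg hl0.le (n+1)), pow_rpow_comm lam hl0.le]
  obtain ⟨hB1, hB2, h2B⟩ := B_props p lam hp hl0 hl1
  constructor
  · rw [tsum_congr hnum_eq, tsum_congr hden_eq, pnorm_ratio p lam K hp hl0 hl1 hKpos, hε2]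
    exact keybound p lam ε _ hp hl0 hε hB1 hB2 h2B hl4 hcl
  · have habs1 : ∀ ℓ:ℕ, |ua ℓ| = K*lam^ℓ := by
      intro ℓ
      rw [hua ℓ]
      exact abs_of_nonneg (mul_nonneg hKpos.le (pow_nonneg hl0.le ℓ))
    have habs2 : ∀ ℓ:ℕ, |uscb ℓ - ua ℓ|
        = if ℓ = 0 then K*(lam*(1-lam)/(1+lam^2)) else K*lam^ℓ := by
      intro ℓ
      rw [hdiffval ℓ]
      cases ℓ with
      | zero => rw [if_pos rfl, if_pos rfl]; exact abs_of_nonneg (mul_nonneg hKpos.le hwnn)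
      | succ n =>
        simp only [Nat.succ_ne_zero, if_false]
        rw [abs_neg]
        exact abs_of_nonneg (mul_nonneg hKpos.le (pow_nonneg hl0.le (n+1)))
    have hwK : K*(lam*(1-lam)/(1+lam^2)) ≤ K*lam :=
      mul_le_mul_of_nonneg_left (w_le_lam lam hl0 hl1) hKpos.le
    rw [iSup_congr habs2, iSup_congr habs1,
      ciSup_geo K lam hKpos.le hl0.le hl1.le,
      ciSup_diff K lam _ hKpos.le hl0 hl1.le hwK]
    rw [mul_comm, mul_div_assoc, div_self (ne_of_gt hKpos), mul_one, hε2]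
    calc |lam - ε| ≤ 20*ε^2 := hcl
    _ ≤ (44+8*p)*ε^2 := by
      have h24 : 0 ≤ (24+8*p)*ε^2 := mul_nonneg (by linarith) (sq_nonneg ε)
      linarith
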